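/- For self-adjoint operators A and B on a finite-dimensional Hilbert space, and any operator P with 0 ≤ P ≤ I, we have Tr[P(A−B)] ≤ Tr[{A ≥ B}(A−B)], where {A ≥ B} denotes the orthogonal projection onto the nonnegative eigenspace of A−B. -/

import Mathlib

open Matrix Kronecker BigOperators
open scoped ComplexOrder

/-- Projection onto the nonnegative eigenspace of a Hermitian matrix
(junk value `0` if the matrix is not Hermitian). -/
noncomputable def posProj {n : Type*} [Fintype n] [DecidableEq n]
    (X : Matrix n n ℂ) : Matrix n n ℂ :=
  if hX : X.IsHermitian then
    (hX.eigenvectorUnitary : Matrix n n ℂ) *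
      Matrix.diagonal (fun i => if (0:ℝ) ≤ hX.eigenvalues i then (1:ℂ) else 0) *
      star (hX.eigenvectorUnitary : Matrix n n ℂ)
  else 0

/-- Functional calculus logarithm of a Hermitian matrix, with the convention `log 0 = 0`
(junk value `0` if the matrix is not Hermitian). -/
noncomputable def matLog {n : Type*} [Fintype n] [DecidableEq n]
    (M : Matrix n n ℂ) : Matrix n n ℂ :=
  if hM : M.IsHermitian then
    (hM.eigenvectorUnitary : Matrix n n ℂ) *
      Matrix.diagonal (fun i => (Real.log (hM.eigenvalues i) : ℂ)) *
      star (hM.eigenvectorUnitary : Matrix n n ℂ)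
  else 0

/-- von Neumann entropy `-Tr[M log M] = -∑ λᵢ log λᵢ` (convention `0 log 0 = 0`). -/
noncomputable def vNEntropy {n : Type*} [Fintype n] [DecidableEq n]
    (M : Matrix n n ℂ) : ℝ :=
  if hM : M.IsHermitian then -∑ i, hM.eigenvalues i * Real.log (hM.eigenvalues i) else 0

/-- A density operator: positive semidefinite with unit trace. -/
def IsDensityOp {n : Type*} [Fintype n] [DecidableEq n] (ρ : Matrix n n ℂ) : Prop :=
  ρ.PosSemidef ∧ ρ.trace = 1

/-- Partial trace over the first tensor factor. -/
noncomputable def traceA {a b : ℕ} (M : Matrix (Fin a × Fin b) (Fin a × Fin b) ℂ) :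
    Matrix (Fin b) (Fin b) ℂ :=
  Matrix.of fun j j' => ∑ i, M (i, j) (i, j')

/-- Partial trace over the second tensor factor. -/
noncomputable def traceB {a b : ℕ} (M : Matrix (Fin a × Fin b) (Fin a × Fin b) ℂ) :
    Matrix (Fin a) (Fin a) ℂ :=
  Matrix.of fun i i' => ∑ j, M (i, j) (i', j)

/-- `n`-fold tensor (Kronecker) power of a matrix. -/
noncomputable def tensorPow {d : ℕ} (ϑ : Matrix (Fin d) (Fin d) ℂ) (n : ℕ) :
    Matrix (Fin n → Fin d) (Fin n → Fin d) ℂ :=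
  Matrix.of fun f g => ∏ i, ϑ (f i) (g i)

lemma diag_re_nonneg {n : Type*} [Fintype n] [DecidableEq n] {Q : Matrix n n ℂ}
    (hQ : Q.PosSemidef) (i : n) : 0 ≤ (Q i i).re := by
  have := hQ.diag_nonneg (i := i)
  exact (Complex.nonneg_iff.mp this).1


theorem projection_trace_inequality {d : ℕ} (A B P : Matrix (Fin d) (Fin d) ℂ)
    (hA : A.IsHermitian) (hB : B.IsHermitian)
    (hP0 : P.PosSemidef) (hP1 : (1 - P).PosSemidef) :
    ((P * (A - B)).trace).re ≤ ((posProj (A - B) * (A - B)).trace).re := by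
  set X := A - B with hXdef
  have hX : X.IsHermitian := hA.sub hB
  set U : Matrix (Fin d) (Fin d) ℂ := (hX.eigenvectorUnitary : Matrix (Fin d) (Fin d) ℂ) with hU
  set lam := hX.eigenvalues with hlam
  have hUU : star U * U = 1 := (Matrix.mem_unitaryGroup_iff').mp hX.eigenvectorUnitary.2
  have hUU' : U * star U = 1 := (Matrix.mem_unitaryGroup_iff).mp hX.eigenvectorUnitary.2
  have hspec : X = U * Matrix.diagonal (RCLike.ofReal ∘ lam) * star U := hX.spectral_theorem
  -- general trace formula
  have key : ∀ M : Matrix (Fin d) (Fin d) ℂ,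
      ((M * X).trace).re = ∑ i, ((star U * M * U) i i).re * lam i := by
    intro M
    conv_lhs => rw [hspec, ← mul_assoc, ← mul_assoc, Matrix.trace_mul_cycle]
    rw [mul_assoc (star U) M U]
    simp [Matrix.trace, Matrix.diag, Matrix.mul_diagonal, Complex.re_sum, Complex.mul_re,
      mul_assoc]
  have conj : ∀ D : Matrix (Fin d) (Fin d) ℂ, star U * (U * D * star U) * U = D := by
    intro D
    simp only [← mul_assoc]
    rw [mul_assoc _ (star U) U, hUU, mul_one, one_mul]
  have hPi : star U * posProj X * U
      = Matrix.diagonal (fun i => if (0:ℝ) ≤ lam i then (1:ℂ) else 0) := by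
    rw [posProj, dif_pos hX]
    exact conj _
  have hQ : (star U * P * U).PosSemidef := by
    have := hP0.conjTranspose_mul_mul_same U
    rwa [← Matrix.star_eq_conjTranspose] at this
  have hQ1 : (1 - star U * P * U).PosSemidef := by
    have := hP1.conjTranspose_mul_mul_same U
    rwa [← Matrix.star_eq_conjTranspose, Matrix.mul_sub, Matrix.sub_mul, mul_one,
      hUU] at this
  rw [key P, key (posProj X)]
  apply Finset.sum_le_sum
  intro i _
  rw [hPi, Matrix.diagonal_apply_eq]
  have h0 : 0 ≤ ((star U * P * U) i i).re := diag_re_nonneg hQ i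
  have h1 : ((star U * P * U) i i).re ≤ 1 := by
    have := diag_re_nonneg hQ1 i
    simp [Matrix.sub_apply, Matrix.one_apply] at this
    linarith
  by_cases hl : (0:ℝ) ≤ lam i
  · simp only [if_pos hl, Complex.one_re]
    nlinarith
  · simp only [if_neg hl, Complex.zero_re, zero_mul]
    exact mul_nonpos_of_nonneg_of_nonpos h0 (le_of_not_ge hl)
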